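/- Let g ⊕ h carry the bracket [(x₀,y₀),(x₁,y₁)] = ([x₀,x₁] + L_{y₀}x₁ − L_{y₁}x₀, [y₀,y₁]) of a semi-direct sum coming from a crossed module μ : g → h, and define ŝ(x,y) = y, t̂(x,y) = y + μ(x), û(y) = (0,y), and composition (x', y+μ(x)) ∘ (x,y) = (x+x', y). Then ŝ, t̂, û are Lie algebra homomorphisms, and composition is a Lie algebra morphism from the fibered product {((x',y'),(x,y)) : y' = y + μ(x)} ⊆ (g⊕h) × (g⊕h) to g ⊕ h. -/

import Mathlib

/-- The Lie 2-algebra associated to a crossed module `μ : g → h` of Lie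
algebras: on `g ⊕ h` with the semi-direct sum bracket, the structural maps
`s(x,y) = y`, `t(x,y) = y + μ(x)`, `u(y) = (0,y)` are Lie algebra
homomorphisms and the composition `(x', y+μ(x)) ∘ (x,y) = (x+x', y)` is a Lie
algebra morphism from the fibered product. -/
theorem crossed_module_to_lie2algebra {K g h : Type} [Field K]
    [LieRing g] [LieAlgebra K g] [LieRing h] [LieAlgebra K h]
    (L : h →ₗ[K] Module.End K g)
    (hL_act : ∀ y₀ y₁ : h, L ⁅y₀, y₁⁆ = L y₀ * L y₁ - L y₁ * L y₀)
    (hL_der : ∀ (y : h) (x₀ x₁ : g), L y ⁅x₀, x₁⁆ = ⁅L y x₀, x₁⁆ + ⁅x₀, L y x₁⁆)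
    (μ : g →ₗ⁅K⁆ h)
    (heq : ∀ (y : h) (x : g), μ (L y x) = ⁅y, μ x⁆)
    (hpeif : ∀ x₀ x₁ : g, L (μ x₀) x₁ = ⁅x₀, x₁⁆) :
    let br : g × h → g × h → g × h := fun p q =>
      (⁅p.1, q.1⁆ + L p.2 q.1 - L q.2 p.1, ⁅p.2, q.2⁆)
    let s : g × h → h := fun p => p.2
    let t : g × h → h := fun p => p.2 + μ p.1
    let u : h → g × h := fun y => (0, y)
    let m : g × h → g × h → g × h := fun p' p => (p.1 + p'.1, p.2)
    -- s is a Lie algebra homomorphism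
    (∀ p q : g × h, s (p + q) = s p + s q) ∧
    (∀ (c : K) (p : g × h), s (c • p) = c • s p) ∧
    (∀ p q : g × h, s (br p q) = ⁅s p, s q⁆) ∧
    -- t is a Lie algebra homomorphism
    (∀ p q : g × h, t (p + q) = t p + t q) ∧
    (∀ (c : K) (p : g × h), t (c • p) = c • t p) ∧
    (∀ p q : g × h, t (br p q) = ⁅t p, t q⁆) ∧
    -- u is a Lie algebra homomorphism
    (∀ y₀ y₁ : h, u (y₀ + y₁) = u y₀ + u y₁) ∧
    (∀ (c : K) (y : h), u (c • y) = c • u y) ∧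
    (∀ y₀ y₁ : h, br (u y₀) (u y₁) = u ⁅y₀, y₁⁆) ∧
    -- the composition is a Lie algebra morphism on the fibered product
    (∀ p' p q' q : g × h, s p' = t p → s q' = t q →
      m (p' + q') (p + q) = m p' p + m q' q) ∧
    (∀ (c : K) (p' p : g × h), m (c • p') (c • p) = c • m p' p) ∧
    (∀ p' p q' q : g × h, s p' = t p → s q' = t q →
      s (br p' q') = t (br p q) ∧
      m (br p' q') (br p q) = br (m p' p) (m q' q)) := by
 
  intro br s t u m
  refine ⟨fun p q => rfl, fun c p => rfl, fun p q => rfl,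
    ?_, ?_, ?_, ?_, ?_, ?_, ?_, ?_, ?_⟩
  · intro p q
    simp only [t, Prod.fst_add, Prod.snd_add, map_add]
    abel
  · intro c p
    simp only [t, Prod.smul_fst, Prod.smul_snd, map_smul, smul_add]
  · intro p q
    simp only [t, br, map_add, map_sub, LieHom.map_lie, heq, lie_add, add_lie]
    rw [← lie_skew (μ p.1) q.2]
    abel
  · intro y₀ y₁
    simp [u, Prod.ext_iff]
  · intro c y
    simp [u, Prod.ext_iff]
  · intro y₀ y₁
    simp [u, br, Prod.ext_iff]
  · intro p' p q' q _ _
    simp only [m, Prod.fst_add, Prod.snd_add, Prod.ext_iff, Prod.mk_add_mk]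
    constructor
    · abel
    · trivial
  · intro c p' p
    simp [m, Prod.ext_iff, smul_add]
  · intro p' p q' q hp hq
    simp only [s, t] at hp hq
    constructor
    · simp only [s, t, br, map_add, map_sub, LieHom.map_lie, heq, hp, hq,
        lie_add, add_lie]
      rw [← lie_skew (μ p.1) q.2]
      abel
    · simp only [m, br, Prod.ext_iff, Prod.mk.injEq, hp, hq, map_add, LinearMap.add_apply,
        hpeif, lie_add, add_lie]
      constructor
      · rw [← lie_skew q.1 p'.1]
        abel
      · trivial
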